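/- Let p be prime, n ≥ 2, ξ ∈ ℚ_p transcendental with λ_n(ξ) > 1. Then λ_1(ξ) ≥ n·(1 + λ_n(ξ)) − 1. -/

import Mathlib

open scoped ENNReal

def SimAt (p : ℕ) [Fact p.Prime] (n : ℕ) (ξ : ℚ_[p]) (lam X : ℝ) : Prop :=
  ∃ x : ℕ → ℤ, (∀ i ≤ n, (|x i| : ℝ) ≤ X) ∧
    (∃ m, 1 ≤ m ∧ m ≤ n ∧ (x 0 : ℚ_[p]) * ξ ^ m ≠ (x m : ℚ_[p])) ∧
    (∀ m, 1 ≤ m → m ≤ n → ‖(x 0 : ℚ_[p]) * ξ ^ m - (x m : ℚ_[p])‖ ≤ X ^ (-lam - 1))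

/-- The exponent `λ_n(ξ)` of simultaneous rational approximation. -/
noncomputable def lambdaExp (p : ℕ) [Fact p.Prime] (n : ℕ) (ξ : ℚ_[p]) : ℝ≥0∞ :=
  sSup {l : ℝ≥0∞ | ∃ lam : ℝ, l = ENNReal.ofReal lam ∧ ∀ X₀ : ℝ, ∃ X, X₀ ≤ X ∧ SimAt p n ξ lam X}


section Aux

variable {p : ℕ} [Fact p.Prime]

lemma int_norm_lb (z : ℤ) (hz : z ≠ 0) : (1:ℝ) ≤ |(z:ℝ)| * ‖(z : ℚ_[p])‖ := by
  have hz' : (z : ℚ_[p]) ≠ 0 := by exact_mod_cast Int.cast_injective.ne_iff.mpr hz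
  have hp1 : (1:ℝ) < p := by exact_mod_cast (Fact.out : p.Prime).one_lt
  have hval := Padic.norm_eq_zpow_neg_valuation hz'
  have hz1 : (1:ℝ) ≤ |(z:ℝ)| := by exact_mod_cast Int.one_le_abs hz
  set v : ℤ := (z : ℚ_[p]).valuation with hv
  rcases le_or_gt v 0 with hv0 | hv0
  · have h1 : (1:ℝ) ≤ ‖(z : ℚ_[p])‖ := by
      rw [hval]
      exact one_le_zpow₀ hp1.le (by omega)
    nlinarith
  · lift v to ℕ using hv0.le with m hm
    have hdvd : (p ^ m : ℤ) ∣ z := by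
      rw [← Padic.norm_int_le_pow_iff_dvd, hval]
    have hple : (p:ℝ) ^ m ≤ |(z:ℝ)| := by
      have h2 : (p:ℤ)^m ≤ |z| := Int.le_of_dvd (abs_pos.mpr hz) ((dvd_abs _ _).mpr hdvd)
      calc (p:ℝ)^m = ((p^m : ℤ) : ℝ) := by push_cast; ring
        _ ≤ ((|z| : ℤ) : ℝ) := by exact_mod_cast h2
        _ = |(z:ℝ)| := by push_cast; simp
    have hn : ‖(z : ℚ_[p])‖ = ((p:ℝ)^m)⁻¹ := by
      rw [hval, zpow_neg, zpow_natCast]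
    rw [hn, le_mul_inv_iff₀ (by positivity), one_mul]
    exact hple

lemma norm_int_pos (z : ℤ) (hz : z ≠ 0) : 0 < ‖(z : ℚ_[p])‖ := by
  rw [norm_pos_iff]
  exact_mod_cast Int.cast_injective.ne_iff.mpr hz

open Polynomial in
lemma irrat (ξ : ℚ_[p]) (hξ : Transcendental ℚ ξ) (a b : ℤ) (ha : a ≠ 0) :
    (a : ℚ_[p]) * ξ ≠ (b : ℚ_[p]) := by
  intro heq
  apply hξ
  refine ⟨C (a:ℚ) * X - C (b:ℚ), ?_, ?_⟩
  · intro hzero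
    have h1 : ((C (a:ℚ) * X - C (b:ℚ)).coeff 1) = (a:ℚ) := by
      rw [Polynomial.coeff_sub, Polynomial.coeff_C_mul, Polynomial.coeff_X_one,
        Polynomial.coeff_C]
      norm_num
    rw [hzero] at h1
    simp at h1
    exact ha (by exact_mod_cast h1.symm)
  · simp only [map_sub, map_mul, Polynomial.aeval_C, Polynomial.aeval_X]
    have h2 : (algebraMap ℚ ℚ_[p]) (a:ℚ) = ((a:ℚ) : ℚ_[p]) := eq_ratCast _ _
    have h3 : (algebraMap ℚ ℚ_[p]) (b:ℚ) = ((b:ℚ) : ℚ_[p]) := eq_ratCast _ _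
    rw [h2, h3]
    push_cast
    rw [heq]
    ring

lemma trans_ne_zero (ξ : ℚ_[p]) (hξ : Transcendental ℚ ξ) : ξ ≠ 0 := by
  intro h
  exact hξ (h ▸ isAlgebraic_zero)

set_option maxHeartbeats 2000000 in
lemma extract (n : ℕ) (hn : 2 ≤ n) (ξ : ℚ_[p]) (hξ : Transcendental ℚ ξ)
    (lam : ℝ) (hlam : 1 < lam) (X : ℝ) (hsol : SimAt p n ξ lam X)
    (hX1 : 1 < X) (hX2 : 12 * (max 1 ‖ξ‖)^n * X^(1-lam) < 1) (hX3 : X^(-lam) < ‖ξ‖) :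
    ∃ a b : ℤ, ∃ P : ℝ, a ≠ 0 ∧ b ≠ 0 ∧ 1 ≤ P ∧ P ≤ X ∧
      (|a|:ℝ)^n * P ≤ X ∧ (|b|:ℝ)^n * P ≤ X ∧
      ‖(a:ℚ_[p]) * ξ - (b:ℚ_[p])‖ ≤ (max 1 ‖ξ‖) * P * X^(-lam-1) := by
  obtain ⟨x, hbd, ⟨m₀, hm₀1, hm₀n, hm₀ne⟩, herr⟩ := hsol
  have hX0 : (0:ℝ) < X := by linarith
  set ε₀ : ℝ := X ^ (-lam - 1) with hε₀
  have hε₀pos : 0 < ε₀ := Real.rpow_pos_of_pos hX0 _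
  have hε₀le1 : ε₀ ≤ 1 := Real.rpow_le_one_of_one_le_of_nonpos hX1.le (by linarith)
  set C : ℝ := max 1 ‖ξ‖ with hC
  have hC1 : 1 ≤ C := le_max_left _ _
  set C₂ : ℝ := C^n with hC₂
  have hC₂1 : 1 ≤ C₂ := one_le_pow₀ hC1
  set E : ℕ → ℚ_[p] := fun k => (x 0 : ℚ_[p]) * ξ^k - (x k : ℚ_[p]) with hEdef
  have hE : ∀ k, k ≤ n → ‖E k‖ ≤ ε₀ := by
    intro k hk
    rcases Nat.eq_zero_or_pos k with rfl | hk1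
    · have : E 0 = 0 := by simp [hEdef]
      rw [this, norm_zero]
      exact hε₀pos.le
    · exact herr k hk1 hk
  have hxik : ∀ k, k ≤ n → ‖ξ^k‖ ≤ C₂ := by
    intro k hk
    calc ‖ξ^k‖ = ‖ξ‖^k := norm_pow _ _
      _ ≤ C^k := pow_le_pow_left₀ (norm_nonneg _) (le_max_right _ _) _
      _ ≤ C^n := pow_le_pow_right₀ hC1 hk
  have hx0norm : ‖((x 0 : ℤ) : ℚ_[p])‖ ≤ 1 := Padic.norm_int_le_one _
  have hterm : ∀ k l, k ≤ n → l ≤ n → ‖(x 0 : ℚ_[p]) * ξ^k * E l‖ ≤ C₂ * ε₀ := by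
    intro k l hk hl
    rw [norm_mul, norm_mul]
    have h1 : ‖((x 0:ℤ):ℚ_[p])‖ * ‖ξ^k‖ ≤ 1 * C₂ :=
      mul_le_mul hx0norm (hxik k hk) (norm_nonneg _) zero_le_one
    rw [one_mul] at h1
    exact mul_le_mul h1 (hE l hl) (norm_nonneg _) (by linarith)
  have hXε : X * ε₀ = X^(-lam) := by
    rw [hε₀]
    rw [show X * X^(-lam-1) = X^(1:ℝ) * X^(-lam-1) by rw [Real.rpow_one]]
    rw [← Real.rpow_add hX0]
    norm_num
  have hminor : ∀ i j, i ≤ n-1 → j ≤ n-1 → x i * x (j+1) = x (i+1) * x j := by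
    intro i j hi hj
    by_contra hne
    set N : ℤ := x i * x (j+1) - x (i+1) * x j with hN
    have hN0 : N ≠ 0 := sub_ne_zero.mpr hne
    have hid : (N : ℚ_[p]) =
        -((x 0 : ℚ_[p]) * ξ^i * E (j+1)) - (x 0 : ℚ_[p]) * ξ^(j+1) * E i + E i * E (j+1)
        + (x 0 : ℚ_[p]) * ξ^(i+1) * E j + (x 0 : ℚ_[p]) * ξ^j * E (i+1) - E (i+1) * E j := by
      simp only [hEdef, hN]
      push_cast
      ring
    have t1 := hterm i (j+1) (by omega) (by omega)
    have t2 := hterm (j+1) i (by omega) (by omega)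
    have t4 := hterm (i+1) j (by omega) (by omega)
    have t5 := hterm j (i+1) (by omega) (by omega)
    have t3 : ‖E i * E (j+1)‖ ≤ C₂ * ε₀ := by
      rw [norm_mul]
      have h1 := mul_le_mul (hE i (by omega)) (hE (j+1) (by omega)) (norm_nonneg _) hε₀pos.le
      nlinarith
    have t6 : ‖E (i+1) * E j‖ ≤ C₂ * ε₀ := by
      rw [norm_mul]
      have h1 := mul_le_mul (hE (i+1) (by omega)) (hE j (by omega)) (norm_nonneg _) hε₀pos.le
      nlinarith
    have hnormN : ‖(N : ℚ_[p])‖ ≤ 6 * (C₂ * ε₀) := by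
      rw [hid]
      have s1 := norm_sub_le (-((x 0 : ℚ_[p]) * ξ^i * E (j+1)) - (x 0 : ℚ_[p]) * ξ^(j+1) * E i + E i * E (j+1)
        + (x 0 : ℚ_[p]) * ξ^(i+1) * E j + (x 0 : ℚ_[p]) * ξ^j * E (i+1)) (E (i+1) * E j)
      have s2 := norm_add_le (-((x 0 : ℚ_[p]) * ξ^i * E (j+1)) - (x 0 : ℚ_[p]) * ξ^(j+1) * E i + E i * E (j+1)
        + (x 0 : ℚ_[p]) * ξ^(i+1) * E j) ((x 0 : ℚ_[p]) * ξ^j * E (i+1))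
      have s3 := norm_add_le (-((x 0 : ℚ_[p]) * ξ^i * E (j+1)) - (x 0 : ℚ_[p]) * ξ^(j+1) * E i + E i * E (j+1))
        ((x 0 : ℚ_[p]) * ξ^(i+1) * E j)
      have s4 := norm_add_le (-((x 0 : ℚ_[p]) * ξ^i * E (j+1)) - (x 0 : ℚ_[p]) * ξ^(j+1) * E i) (E i * E (j+1))
      have s5 := norm_sub_le (-((x 0 : ℚ_[p]) * ξ^i * E (j+1))) ((x 0 : ℚ_[p]) * ξ^(j+1) * E i)
      have s6 : ‖-((x 0 : ℚ_[p]) * ξ^i * E (j+1))‖ = ‖(x 0 : ℚ_[p]) * ξ^i * E (j+1)‖ := norm_neg _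
      linarith
    have habs : |(N : ℝ)| ≤ 2 * X^2 := by
      have hN_cast : (N:ℝ) = (x i : ℝ) * ((x (j+1) : ℤ):ℝ) - ((x (i+1):ℤ):ℝ) * ((x j:ℤ):ℝ) := by
        rw [hN]; push_cast; ring
      have b1 : |((x i:ℤ):ℝ)| ≤ X := hbd i (by omega)
      have b2 : |((x (j+1):ℤ):ℝ)| ≤ X := hbd (j+1) (by omega)
      have b3 : |((x (i+1):ℤ):ℝ)| ≤ X := hbd (i+1) (by omega)
      have b4 : |((x j:ℤ):ℝ)| ≤ X := hbd j (by omega)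
      rw [hN_cast]
      calc |(x i : ℝ) * ((x (j+1) : ℤ):ℝ) - ((x (i+1):ℤ):ℝ) * ((x j:ℤ):ℝ)|
          ≤ |(x i : ℝ) * ((x (j+1) : ℤ):ℝ)| + |((x (i+1):ℤ):ℝ) * ((x j:ℤ):ℝ)| := abs_sub _ _
        _ = |((x i:ℤ):ℝ)| * |((x (j+1) : ℤ):ℝ)| + |((x (i+1):ℤ):ℝ)| * |((x j:ℤ):ℝ)| := by
            rw [abs_mul, abs_mul]
        _ ≤ X * X + X * X := by
            gcongr <;> first | exact abs_nonneg _ | assumption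
        _ = 2 * X^2 := by ring
    have hcontr := int_norm_lb (p := p) N hN0
    have hfin : (1:ℝ) ≤ 2*X^2 * (6 * (C₂ * ε₀)) :=
      hcontr.trans (mul_le_mul habs hnormN (norm_nonneg _) (by positivity))
    have hXpow : X^2 * ε₀ = X^(1-lam) := by
      rw [hε₀, ← Real.rpow_natCast X 2, ← Real.rpow_add hX0]
      congr 1
      push_cast
      ring
    have : (1:ℝ) ≤ 12 * C₂ * X^(1-lam) := by nlinarith
    linarith
  have hx0ne : x 0 ≠ 0 := by
    intro hx00
    have hzero : ∀ m, m ≤ n-1 → x m = 0 := by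
      intro m
      induction m with
      | zero => intro _; exact hx00
      | succ k ih =>
        intro hk
        have h1 : x k * x (k+1+1) = x (k+1) * x (k+1) := hminor k (k+1) (by omega) hk
        rw [ih (by omega)] at h1
        have : x (k+1) * x (k+1) = 0 := by linarith [h1]
        exact mul_self_eq_zero.mp this
    have hxn0 : x n ≠ 0 := by
      intro hxn0
      apply hm₀ne
      have hxm₀ : x m₀ = 0 := by
        rcases Nat.lt_or_ge m₀ n with h' | h'
        · exact hzero m₀ (by omega)
        · have : m₀ = n := by omega
          rw [this]; exact hxn0
      rw [hx00, hxm₀]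
      push_cast
      ring
    have h1 : ‖E n‖ ≤ ε₀ := hE n le_rfl
    have h2 : ‖E n‖ = ‖((x n : ℤ) : ℚ_[p])‖ := by
      simp only [hEdef]
      rw [hx00]
      push_cast
      rw [zero_mul, zero_sub, norm_neg]
    have h3 := int_norm_lb (p := p) (x n) hxn0
    have h4 : |(x n : ℝ)| ≤ X := hbd n le_rfl
    have h5 : (1:ℝ) ≤ X * ε₀ := by
      calc (1:ℝ) ≤ |(x n:ℝ)| * ‖((x n : ℤ):ℚ_[p])‖ := h3
        _ ≤ X * ε₀ := mul_le_mul h4 (h2 ▸ h1) (norm_nonneg _) hX0.le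
    have h7 : X^(-lam) < 1 := Real.rpow_lt_one_of_one_lt_of_neg hX1 (by linarith)
    rw [hXε] at h5
    linarith
  -- gcd setup
  set g : ℤ := (Int.gcd (x 0) (x 1) : ℤ) with hgdef
  have hgpos : 0 < Int.gcd (x 0) (x 1) := Int.gcd_pos_of_ne_zero_left _ hx0ne
  have hg0 : g ≠ 0 := by
    rw [hgdef]
    exact_mod_cast hgpos.ne'
  set a : ℤ := x 0 / g with hadef
  set b : ℤ := x 1 / g with hbdef
  have hga : g * a = x 0 := Int.mul_ediv_cancel' (Int.gcd_dvd_left _ _)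
  have hgb : g * b = x 1 := Int.mul_ediv_cancel' (Int.gcd_dvd_right _ _)
  have hab : Int.gcd a b = 1 := Int.gcd_div_gcd_div_gcd hgpos
  have ha0 : a ≠ 0 := by
    intro h
    apply hx0ne
    rw [← hga, h, mul_zero]
  have hA6 : ∀ m, m ≤ n-1 → a * x (m+1) = b * x m := by
    intro m hm
    have h1 : x 0 * x (m+1) = x 1 * x m := hminor 0 m (by omega) hm
    rw [← hga, ← hgb] at h1
    have h2 : g * (a * x (m+1)) = g * (b * x m) := by linear_combination h1
    exact mul_left_cancel₀ hg0 h2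
  have hA7 : ∀ m, m ≤ n → x m * a^m = x 0 * b^m := by
    intro m
    induction m with
    | zero => intro _; simp
    | succ k ih =>
      intro hk
      have h1 := hA6 k (by omega)
      have h2 := ih (by omega)
      calc x (k+1) * a^(k+1) = (a * x (k+1)) * a^k := by ring
        _ = (b * x k) * a^k := by rw [h1]
        _ = b * (x k * a^k) := by ring
        _ = b * (x 0 * b^k) := by rw [h2]
        _ = x 0 * b^(k+1) := by ring
  have hb0 : b ≠ 0 := by
    intro hb
    have hx1all : ∀ m, 1 ≤ m → m ≤ n → x m = 0 := by
      intro m h1 h2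
      obtain ⟨k, rfl⟩ : ∃ k, m = k + 1 := ⟨m-1, by omega⟩
      have h3 := hA6 k (by omega)
      rw [hb, zero_mul] at h3
      exact (mul_eq_zero.mp h3).resolve_left ha0
    have h1 : ‖E 1‖ ≤ ε₀ := hE 1 (by omega)
    have h2 : E 1 = ((x 0:ℤ) : ℚ_[p]) * ξ := by
      simp only [hEdef]
      rw [hx1all 1 le_rfl (by omega)]
      push_cast
      rw [pow_one]
      ring
    have h3 := int_norm_lb (p := p) (x 0) hx0ne
    have h4 : |(x 0 : ℝ)| ≤ X := hbd 0 (by omega)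
    have h5 : ‖ξ‖ ≤ X * ε₀ := by
      calc ‖ξ‖ = 1 * ‖ξ‖ := (one_mul _).symm
        _ ≤ (|(x 0:ℝ)| * ‖((x 0:ℤ):ℚ_[p])‖) * ‖ξ‖ := by
            exact mul_le_mul_of_nonneg_right h3 (norm_nonneg ξ)
        _ = |(x 0:ℝ)| * ‖((x 0:ℤ):ℚ_[p]) * ξ‖ := by rw [norm_mul]; ring
        _ = |(x 0:ℝ)| * ‖E 1‖ := by rw [← h2]
        _ ≤ X * ε₀ := mul_le_mul h4 h1 (norm_nonneg _) hX0.le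
    rw [hXε] at h5
    linarith
  have hxAn : x n * a^n = x 0 * b^n := hA7 n le_rfl
  have hxn0 : x n ≠ 0 := by
    intro h
    rw [h, zero_mul] at hxAn
    exact (mul_ne_zero hx0ne (pow_ne_zero n hb0)) hxAn.symm
  have hcop : IsCoprime a b := Int.isCoprime_iff_gcd_eq_one.mpr hab
  have hdvd : a^n ∣ x 0 := by
    refine (hcop.pow (n := n) (m := n)).dvd_of_dvd_mul_right (Dvd.intro (x n) ?_)
    linear_combination hxAn
  obtain ⟨c, hc⟩ := hdvd
  have hc0 : c ≠ 0 := by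
    intro h
    apply hx0ne
    rw [hc, h, mul_zero]
  have hxnc : x n = c * b^n := by
    have h1 : x n * a^n = (c * b^n) * a^n := by rw [hxAn, hc]; ring
    exact mul_right_cancel₀ (pow_ne_zero n ha0) h1
  set P : ℝ := ‖((c:ℤ) : ℚ_[p])‖⁻¹ with hPdef
  have hcnorm : 0 < ‖((c:ℤ):ℚ_[p])‖ := norm_int_pos c hc0
  have hcnorm1 : ‖((c:ℤ):ℚ_[p])‖ ≤ 1 := Padic.norm_int_le_one _
  have hP0 : 0 < P := by positivity
  have hPmul : P * ‖((c:ℤ):ℚ_[p])‖ = 1 := inv_mul_cancel₀ hcnorm.ne'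
  have hP1 : 1 ≤ P := by nlinarith
  have hPc : P ≤ |(c:ℝ)| := by
    have h1 := int_norm_lb (p := p) c hc0
    nlinarith
  have hcastx0 : |((x 0:ℤ):ℝ)| = (|a|:ℝ)^n * |(c:ℝ)| := by
    rw [hc]
    push_cast
    rw [abs_mul, abs_pow]
  have hcastxn : |((x n:ℤ):ℝ)| = (|b|:ℝ)^n * |(c:ℝ)| := by
    rw [hxnc]
    push_cast
    rw [abs_mul, abs_pow]
    ring
  have habsa : (0:ℝ) ≤ (|a|:ℝ) := by positivity
  have hax : (|a|:ℝ)^n * P ≤ X := by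
    have h1 : (|a|:ℝ)^n * P ≤ (|a|:ℝ)^n * |(c:ℝ)| := by
      apply mul_le_mul_of_nonneg_left hPc (by positivity)
    calc (|a|:ℝ)^n * P ≤ (|a|:ℝ)^n * |(c:ℝ)| := h1
      _ = |((x 0:ℤ):ℝ)| := hcastx0.symm
      _ ≤ X := hbd 0 (by omega)
  have hbx : (|b|:ℝ)^n * P ≤ X := by
    have h1 : (|b|:ℝ)^n * P ≤ (|b|:ℝ)^n * |(c:ℝ)| := by
      apply mul_le_mul_of_nonneg_left hPc (by positivity)
    calc (|b|:ℝ)^n * P ≤ (|b|:ℝ)^n * |(c:ℝ)| := h1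
      _ = |((x n:ℤ):ℝ)| := hcastxn.symm
      _ ≤ X := hbd n le_rfl
  have ha1 : (1:ℝ) ≤ (|a|:ℝ) := by exact_mod_cast Int.one_le_abs ha0
  have hPX : P ≤ X := by
    have h1 : (|a|:ℝ)^n * P ≥ 1 * P := by
      apply mul_le_mul_of_nonneg_right _ hP0.le
      exact one_le_pow₀ ha1
    rw [one_mul] at h1
    linarith
  refine ⟨a, b, P, ha0, hb0, hP1, hPX, hax, hbx, ?_⟩
  rcases em ((p:ℤ) ∣ a) with hpa | hpa
  · -- p ∣ a, so p ∤ b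
    have hpb : ¬ (p:ℤ) ∣ b := by
      intro hpb
      have hd := Int.dvd_gcd hpa hpb
      rw [hab] at hd
      have h2 : (p:ℤ) ≤ 1 := Int.le_of_dvd one_pos (by exact_mod_cast hd)
      have h3 : 2 ≤ p := (Fact.out : p.Prime).two_le
      omega
    have hnb : ‖((b:ℤ):ℚ_[p])‖ = 1 := by
      refine le_antisymm (Padic.norm_int_le_one _) (not_lt.mp fun hlt => hpb ?_)
      exact (Padic.norm_intCast_lt_one_iff (k := b)).mp hlt
    have hpow' : ξ * ξ^(n-1) = ξ^n := by
      rw [← pow_succ']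
      congr 1
      omega
    have hint2 : a * x n = b * x (n-1) := by
      have h1 := hA6 (n-1) (by omega)
      rwa [Nat.sub_add_cancel (by omega)] at h1
    have hW : ((x n:ℤ) : ℚ_[p]) - ξ * ((x (n-1):ℤ) : ℚ_[p]) = ξ * E (n-1) - E n := by
      simp only [hEdef]
      linear_combination -((x 0:ℤ) : ℚ_[p]) * hpow'
    have hWnorm : ‖((x n:ℤ) : ℚ_[p]) - ξ * ((x (n-1):ℤ):ℚ_[p])‖ ≤ C * ε₀ := by
      rw [hW, sub_eq_add_neg]
      refine le_trans (Padic.nonarchimedean _ _) (max_le ?_ ?_)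
      · rw [norm_mul]
        exact mul_le_mul (le_max_right 1 ‖ξ‖) (hE (n-1) (by omega)) (norm_nonneg _) (by linarith)
      · rw [norm_neg]
        calc ‖E n‖ ≤ ε₀ := hE n le_rfl
          _ ≤ C * ε₀ := by nlinarith
    have hid2 : ((x n:ℤ) : ℚ_[p]) * ((a:ℚ_[p]) * ξ - (b:ℚ_[p]))
        = -(b:ℚ_[p]) * (((x n:ℤ):ℚ_[p]) - ξ * ((x (n-1):ℤ):ℚ_[p])) := by
      have hcast : ((a:ℤ):ℚ_[p]) * ((x n:ℤ):ℚ_[p]) = ((b:ℤ):ℚ_[p]) * ((x (n-1):ℤ):ℚ_[p]) := by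
        have := congrArg (fun z : ℤ => (z : ℚ_[p])) hint2
        push_cast at this
        exact this
      linear_combination ξ * hcast
    have hnxn : ‖((x n:ℤ):ℚ_[p])‖ = ‖((c:ℤ):ℚ_[p])‖ := by
      rw [hxnc]
      push_cast
      rw [norm_mul, norm_pow, hnb, one_pow, mul_one]
    have hnorms := congrArg norm hid2
    rw [norm_mul, norm_mul, norm_neg, hnb, one_mul, hnxn] at hnorms
    have hfinal : ‖((c:ℤ):ℚ_[p])‖ * ‖(a:ℚ_[p]) * ξ - (b:ℚ_[p])‖ ≤ C * ε₀ := hnorms ▸ hWnorm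
    calc ‖(a:ℚ_[p]) * ξ - (b:ℚ_[p])‖ = P * (‖((c:ℤ):ℚ_[p])‖ * ‖(a:ℚ_[p]) * ξ - (b:ℚ_[p])‖) := by
          rw [← mul_assoc, hPmul, one_mul]
      _ ≤ P * (C * ε₀) := mul_le_mul_of_nonneg_left hfinal hP0.le
      _ = C * P * ε₀ := by ring
  · -- p ∤ a
    have hna : ‖((a:ℤ):ℚ_[p])‖ = 1 := by
      refine le_antisymm (Padic.norm_int_le_one _) (not_lt.mp fun hlt => hpa ?_)
      exact (Padic.norm_intCast_lt_one_iff (k := a)).mp hlt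
    have hint : x 0 * b = x 1 * a := by
      rw [← hga, ← hgb]
      ring
    have hid2 : ((x 0:ℤ) : ℚ_[p]) * ((a:ℚ_[p]) * ξ - (b:ℚ_[p])) = (a:ℚ_[p]) * E 1 := by
      have hcast : ((x 0:ℤ):ℚ_[p]) * ((b:ℤ):ℚ_[p]) = ((x 1:ℤ):ℚ_[p]) * ((a:ℤ):ℚ_[p]) := by
        have := congrArg (fun z : ℤ => (z : ℚ_[p])) hint
        push_cast at this
        exact this
      simp only [hEdef, pow_one]
      linear_combination -hcast
    have hnx0 : ‖((x 0:ℤ):ℚ_[p])‖ = ‖((c:ℤ):ℚ_[p])‖ := by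
      rw [hc]
      push_cast
      rw [norm_mul, norm_pow, hna, one_pow, one_mul]
    have hnorms := congrArg norm hid2
    rw [norm_mul, norm_mul, hna, one_mul, hnx0] at hnorms
    have hfinal : ‖((c:ℤ):ℚ_[p])‖ * ‖(a:ℚ_[p]) * ξ - (b:ℚ_[p])‖ ≤ C * ε₀ := by
      rw [hnorms]
      calc ‖E 1‖ ≤ ε₀ := hE 1 (by omega)
        _ ≤ C * ε₀ := by nlinarith
    calc ‖(a:ℚ_[p]) * ξ - (b:ℚ_[p])‖ = P * (‖((c:ℤ):ℚ_[p])‖ * ‖(a:ℚ_[p]) * ξ - (b:ℚ_[p])‖) := by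
          rw [← mul_assoc, hPmul, one_mul]
      _ ≤ P * (C * ε₀) := mul_le_mul_of_nonneg_left hfinal hP0.le
      _ = C * P * ε₀ := by ring

lemma core (n : ℕ) (hn : 2 ≤ n) (ξ : ℚ_[p]) (hξ : Transcendental ℚ ξ)
    (lam : ℝ) (hlam : 1 < lam) (hP : ∀ X₀ : ℝ, ∃ X, X₀ ≤ X ∧ SimAt p n ξ lam X)
    (μ : ℝ) (hμ0 : 0 ≤ μ) (hμ : μ + 1 < n * (lam + 1)) :
    ∀ X₀ : ℝ, ∃ Y, X₀ ≤ Y ∧ SimAt p 1 ξ μ Y := by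
  intro X₀
  set C : ℝ := max 1 ‖ξ‖ with hCdef
  have hC1 : 1 ≤ C := le_max_left _ _
  have hC0 : (0:ℝ) < C := by linarith
  set δ : ℝ := n * (lam + 1) - (μ + 1) with hδ
  have hδ0 : 0 < δ := by rw [hδ]; linarith
  set X₀' : ℝ := max (max X₀ 1) (C ^ (1/δ)) with hX₀'def
  have hX₀'1 : 1 ≤ X₀' := le_trans (le_max_right X₀ 1) (le_max_left _ _)
  have hX₀'X₀ : X₀ ≤ X₀' := le_trans (le_max_left X₀ 1) (le_max_left _ _)
  set N₀ : ℕ := ⌈X₀'⌉₊ with hN₀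
  have hN₀X : X₀' ≤ (N₀:ℝ) := Nat.le_ceil _
  have hN₀1 : 1 ≤ N₀ := by
    have h1 : (1:ℝ) ≤ (N₀:ℝ) := le_trans hX₀'1 hN₀X
    exact_mod_cast h1
  set Sfin : Finset (ℤ × ℤ) :=
    ((Finset.Icc (-(N₀:ℤ)) (N₀:ℤ)) ×ˢ (Finset.Icc (-(N₀:ℤ)) (N₀:ℤ))).filter (fun q => q.1 ≠ 0)
    with hSfin
  have hSne : Sfin.Nonempty := by
    refine ⟨(1, 0), ?_⟩
    simp only [hSfin, Finset.mem_filter, Finset.mem_product, Finset.mem_Icc]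
    refine ⟨⟨⟨by omega, by omega⟩, ⟨by omega, by omega⟩⟩, one_ne_zero⟩
  set ε : ℝ := Sfin.inf' hSne (fun q => ‖(q.1:ℚ_[p]) * ξ - (q.2:ℚ_[p])‖) with hεdef
  have hεpos : 0 < ε := by
    rw [hεdef, Finset.lt_inf'_iff]
    intro q hq
    have hq1 : q.1 ≠ 0 := (Finset.mem_filter.mp hq).2
    exact norm_pos_iff.mpr (sub_ne_zero.mpr (irrat ξ hξ q.1 q.2 hq1))
  have hξ0 : (0:ℝ) < ‖ξ‖ := norm_pos_iff.mpr (trans_ne_zero ξ hξ)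
  have hev : ∀ᶠ X : ℝ in Filter.atTop,
      12 * C^n * X^(1-lam) < 1 ∧ X^(-lam) < ‖ξ‖ ∧ C * X^(-lam) < ε ∧ 1 < X := by
    have t0 : Filter.Tendsto (fun X:ℝ => X^(1-lam)) Filter.atTop (nhds 0) := by
      have := tendsto_rpow_neg_atTop (show 0 < lam - 1 by linarith)
      convert this using 2 with X
      ring_nf
    have t1 : Filter.Tendsto (fun X:ℝ => 12 * C^n * X^(1-lam)) Filter.atTop (nhds 0) := by
      have := t0.const_mul (12 * C^n)
      simpa using this
    have t2 : Filter.Tendsto (fun X:ℝ => X^(-lam)) Filter.atTop (nhds 0) := by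
      have := tendsto_rpow_neg_atTop (show (0:ℝ) < lam by linarith)
      convert this using 2 with X
    have t3 : Filter.Tendsto (fun X:ℝ => C * X^(-lam)) Filter.atTop (nhds 0) := by
      have := t2.const_mul C
      simpa using this
    exact (t1.eventually_lt_const one_pos).and
      ((t2.eventually_lt_const hξ0).and
        ((t3.eventually_lt_const hεpos).and (Filter.eventually_gt_atTop 1)))
  obtain ⟨T, hT⟩ := Filter.eventually_atTop.mp hev
  obtain ⟨X, hXT, hsol⟩ := hP (max T X₀')
  obtain ⟨h1, h2, h3, h4⟩ := hT X (le_trans (le_max_left T X₀') hXT)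
  obtain ⟨a, b, P, ha0, hb0, hP1, hPX, hax, hbx, herr2⟩ :=
    extract n hn ξ hξ lam hlam X hsol h4 h1 h2
  have hX0 : (0:ℝ) < X := by linarith
  have hP0 : (0:ℝ) < P := by linarith
  have hXε : X * X^(-lam-1) = X^(-lam) := by
    rw [show X * X^(-lam-1) = X^(1:ℝ) * X^(-lam-1) by rw [Real.rpow_one]]
    rw [← Real.rpow_add hX0]
    congr 1
    ring
  have hE1 : ‖(a:ℚ_[p])*ξ - (b:ℚ_[p])‖ ≤ C * X^(-lam) := by
    have hr : (0:ℝ) ≤ X^(-lam-1) := (Real.rpow_pos_of_pos hX0 _).le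
    calc ‖(a:ℚ_[p])*ξ - (b:ℚ_[p])‖ ≤ C * P * X^(-lam-1) := herr2
      _ ≤ C * X * X^(-lam-1) := by
          apply mul_le_mul_of_nonneg_right _ hr
          apply mul_le_mul_of_nonneg_left hPX (by linarith)
      _ = C * (X * X^(-lam-1)) := by ring
      _ = C * X^(-lam) := by rw [hXε]
  have hElt : ‖(a:ℚ_[p])*ξ - (b:ℚ_[p])‖ < ε := lt_of_le_of_lt hE1 h3
  have hbig : X₀' < max (|a|:ℝ) (|b|:ℝ) := by
    by_contra hle
    push_neg at hle
    rw [max_le_iff] at hle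
    have hmem : (a, b) ∈ Sfin := by
      have ha' : |a| ≤ (N₀:ℤ) := by
        have : (|a|:ℝ) ≤ (N₀:ℝ) := le_trans hle.1 hN₀X
        exact_mod_cast this
      have hb' : |b| ≤ (N₀:ℤ) := by
        have : (|b|:ℝ) ≤ (N₀:ℝ) := le_trans hle.2 hN₀X
        exact_mod_cast this
      rw [abs_le] at ha' hb'
      simp only [hSfin, Finset.mem_filter, Finset.mem_product, Finset.mem_Icc]
      exact ⟨⟨⟨ha'.1, ha'.2⟩, ⟨hb'.1, hb'.2⟩⟩, ha0⟩
    have hinf := Finset.inf'_le (fun q : ℤ × ℤ => ‖(q.1:ℚ_[p]) * ξ - (q.2:ℚ_[p])‖) hmem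
    rw [← hεdef] at hinf
    simp only at hinf
    linarith
  set Y : ℝ := (X / P)^((n:ℝ)⁻¹) with hYdef
  have hXP0 : 0 < X / P := div_pos hX0 hP0
  have hn0 : n ≠ 0 := by omega
  have haXP : (|a|:ℝ)^n ≤ X / P := (le_div_iff₀ hP0).mpr hax
  have hbXP : (|b|:ℝ)^n ≤ X / P := (le_div_iff₀ hP0).mpr hbx
  have hYa : (|a|:ℝ) ≤ Y := by
    have h5 := Real.rpow_le_rpow (by positivity) haXP (by positivity : (0:ℝ) ≤ (n:ℝ)⁻¹)
    rwa [Real.pow_rpow_inv_natCast (by positivity) hn0] at h5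
  have hYb : (|b|:ℝ) ≤ Y := by
    have h5 := Real.rpow_le_rpow (by positivity) hbXP (by positivity : (0:ℝ) ≤ (n:ℝ)⁻¹)
    rwa [Real.pow_rpow_inv_natCast (by positivity) hn0] at h5
  have hYX₀' : X₀' < Y := lt_of_lt_of_le hbig (max_le hYa hYb)
  have hY1 : 1 ≤ Y := le_of_lt (lt_of_le_of_lt hX₀'1 hYX₀')
  have hY0 : (0:ℝ) < Y := by linarith
  have hYn : Y^n = X / P := Real.rpow_inv_natCast_pow hXP0.le hn0
  have hXeq : X = Y^n * P := by
    rw [hYn]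
    field_simp
  have hCY : C ≤ Y^δ := by
    have h5 : C^(1/δ) ≤ Y := le_trans (le_max_right _ _) (le_of_lt hYX₀')
    have h6 := Real.rpow_le_rpow (by positivity) h5 hδ0.le
    rwa [← Real.rpow_mul hC0.le, one_div, inv_mul_cancel₀ hδ0.ne', Real.rpow_one] at h6
  have herr3 : ‖(a:ℚ_[p])*ξ - (b:ℚ_[p])‖ ≤ Y ^ (-μ-1) := by
    have hPexp : P * P^(-lam-1) = P^(-lam) := by
      rw [show P * P^(-lam-1) = P^(1:ℝ) * P^(-lam-1) by rw [Real.rpow_one]]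
      rw [← Real.rpow_add hP0]
      congr 1
      ring
    have hPle1 : P^(-lam) ≤ 1 := Real.rpow_le_one_of_one_le_of_nonpos hP1 (by linarith)
    have hYnn : (Y:ℝ)^n = Y^((n:ℝ)) := (Real.rpow_natCast Y n).symm
    have hXpow : X^(-lam-1) = Y^((n:ℝ)*(-lam-1)) * P^(-lam-1) := by
      rw [hXeq, Real.mul_rpow (by positivity) hP0.le, hYnn, ← Real.rpow_mul hY0.le]
    have hstep : C * P * X^(-lam-1) = C * Y^((n:ℝ)*(-lam-1)) * (P * P^(-lam-1)) := by
      rw [hXpow]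
      ring
    calc ‖(a:ℚ_[p])*ξ - (b:ℚ_[p])‖ ≤ C * P * X^(-lam-1) := herr2
      _ = C * Y^((n:ℝ)*(-lam-1)) * (P * P^(-lam-1)) := hstep
      _ = C * Y^((n:ℝ)*(-lam-1)) * P^(-lam) := by rw [hPexp]
      _ ≤ C * Y^((n:ℝ)*(-lam-1)) * 1 := by
          apply mul_le_mul_of_nonneg_left hPle1 (by positivity)
      _ = C * Y^((n:ℝ)*(-lam-1)) := mul_one _
      _ ≤ Y^δ * Y^((n:ℝ)*(-lam-1)) := by
          apply mul_le_mul_of_nonneg_right hCY (by positivity)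
      _ = Y^(δ + (n:ℝ)*(-lam-1)) := (Real.rpow_add hY0 _ _).symm
      _ = Y^(-μ-1) := by
          congr 1
          rw [hδ]
          ring
  refine ⟨Y, le_trans hX₀'X₀ hYX₀'.le, fun i => if i = 0 then a else b, ?_, ⟨1, le_rfl, le_rfl, ?_⟩, ?_⟩
  · intro i hi
    interval_cases i
    · simpa using hYa
    · simpa using hYb
  · simpa [pow_one] using irrat ξ hξ a b ha0
  · intro m hm1 hm2
    have hm : m = 1 := le_antisymm hm2 hm1
    subst hm
    simpa [pow_one] using herr3

end Aux

/-- If `λ_n(ξ) > 1` for a transcendental `ξ`, then `λ_1(ξ) ≥ n(1 + λ_n(ξ)) − 1`. -/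
theorem stmt6 (p : ℕ) [Fact p.Prime] (n : ℕ) (hn : 2 ≤ n) (ξ : ℚ_[p])
    (hξ : Transcendental ℚ ξ) (h : 1 < lambdaExp p n ξ) :
    (n : ℝ≥0∞) * (1 + lambdaExp p n ξ) - 1 ≤ lambdaExp p 1 ξ := by
  classical
  set S : Set ℝ≥0∞ :=
    {l : ℝ≥0∞ | ∃ lam : ℝ, l = ENNReal.ofReal lam ∧ ∀ X₀ : ℝ, ∃ X, X₀ ≤ X ∧ SimAt p n ξ lam X}
    with hSdef
  have hLS : lambdaExp p n ξ = sSup S := rfl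
  obtain ⟨l₀, hl₀S, hl₀⟩ := lt_sSup_iff.mp (hLS ▸ h)
  haveI : Nonempty S := ⟨⟨l₀, hl₀S⟩⟩
  refine le_of_forall_lt_imp_le_of_dense ?_
  intro c hc
  have hcne : c ≠ ⊤ := ne_top_of_lt hc
  have hL : (n : ℝ≥0∞) * (1 + lambdaExp p n ξ) - 1
      = ⨆ l : S, ((n : ℝ≥0∞) * (1 + (l : ℝ≥0∞)) - 1) := by
    rw [hLS, sSup_eq_iSup', ENNReal.add_iSup, ENNReal.mul_iSup, ENNReal.iSup_sub]
  rw [hL] at hc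
  obtain ⟨⟨l, hlS⟩, hcl⟩ := lt_iSup_iff.mp hc
  have hcl' : c < (n : ℝ≥0∞) * (1 + max l l₀) - 1 := by
    refine hcl.trans_le (tsub_le_tsub_right (mul_le_mul' le_rfl (add_le_add_right (le_max_left _ _) _)) _)
  have hl'S : max l l₀ ∈ S := by
    rcases max_cases l l₀ with ⟨he, _⟩ | ⟨he, _⟩ <;> rw [he] <;> assumption
  have hl'1 : 1 < max l l₀ := hl₀.trans_le (le_max_right _ _)
  obtain ⟨lam, hlam_eq, hPlam⟩ := hl'S
  rw [hlam_eq] at hcl' hl'1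
  have hlam1 : 1 < lam := ENNReal.one_lt_ofReal.mp hl'1
  have hlam0 : 0 ≤ lam := by linarith
  have hofr : (n : ℝ≥0∞) * (1 + ENNReal.ofReal lam) - 1
      = ENNReal.ofReal ((n : ℝ) * (1 + lam) - 1) := by
    rw [ENNReal.ofReal_sub _ zero_le_one, ENNReal.ofReal_mul (by positivity),
      ENNReal.ofReal_add zero_le_one hlam0]
    simp [ENNReal.ofReal_natCast, ENNReal.ofReal_one]
  rw [hofr] at hcl'
  set μ : ℝ := c.toReal with hμdef
  have hμ0 : 0 ≤ μ := ENNReal.toReal_nonneg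
  have hcμ : c = ENNReal.ofReal μ := (ENNReal.ofReal_toReal hcne).symm
  have hμlt : μ + 1 < n * (lam + 1) := by
    have := (ENNReal.lt_ofReal_iff_toReal_lt hcne).mp hcl'
    rw [← hμdef] at this
    nlinarith
  have hP1 := core n hn ξ hξ lam hlam1 hPlam μ hμ0 hμlt
  have hmem : ENNReal.ofReal μ ∈
      {l : ℝ≥0∞ | ∃ lam : ℝ, l = ENNReal.ofReal lam ∧ ∀ X₀ : ℝ, ∃ X, X₀ ≤ X ∧ SimAt p 1 ξ lam X} :=
    ⟨μ, rfl, hP1⟩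
  rw [hcμ]
  exact le_sSup hmem
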